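/- Let α be an element of a number field K such that for every n ≥ 1 there exists β ∈ K with βⁿ = α. Then α = 0 or α = 1. -/

import Mathlib

open NumberField IsDedekindDomain FractionalIdeal
open scoped nonZeroDivisors

private lemma aux_int_eq_zero_of_forall_dvd (c : ℤ) (h : ∀ n : ℕ, 1 ≤ n → (n : ℤ) ∣ c) :
    c = 0 := by
  by_contra hc
  have h1 : ((c.natAbs + 1 : ℕ) : ℤ) ∣ |c| := (dvd_abs _ c).mpr (h (c.natAbs + 1) (by omega))
  have h2 := Int.le_of_dvd (abs_pos.mpr hc) h1
  rw [Int.abs_eq_natAbs] at h2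
  omega

private lemma aux_isIntegral_of_count_zero {K : Type*} [Field K] [NumberField K] {x : K}
    (hx : x ≠ 0)
    (hc : ∀ v : HeightOneSpectrum (𝓞 K), count K v (spanSingleton (𝓞 K)⁰ x) = 0) :
    IsIntegral ℤ x := by
  have hI : spanSingleton (𝓞 K)⁰ x ≠ 0 := spanSingleton_ne_zero_iff.mpr hx
  have h1 : spanSingleton (𝓞 K)⁰ x = 1 := by
    rw [← finprod_heightOneSpectrum_factorization' K hI]
    calc ∏ᶠ v : HeightOneSpectrum (𝓞 K),
          (v.asIdeal : FractionalIdeal (𝓞 K)⁰ K) ^ (count K v (spanSingleton (𝓞 K)⁰ x))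
        = ∏ᶠ _ : HeightOneSpectrum (𝓞 K), (1 : FractionalIdeal (𝓞 K)⁰ K) :=
          finprod_congr fun v => by rw [hc v, zpow_zero]
      _ = 1 := finprod_one
  have hx1 : x ∈ (1 : FractionalIdeal (𝓞 K)⁰ K) := h1 ▸ mem_spanSingleton_self _ x
  obtain ⟨r, hr⟩ := (mem_one_iff _).mp hx1
  rw [← hr]
  exact NumberField.RingOfIntegers.isIntegral_coe r

/-- Let `α` be an element of a number field `K` such that for every `n ≥ 1`
there exists `β ∈ K` with `βⁿ = α`.  Then `α = 0` or `α = 1`. -/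
theorem eq_zero_or_one_of_all_roots
    {K : Type*} [Field K] [NumberField K] (α : K)
    (h : ∀ n : ℕ, 1 ≤ n → ∃ β : K, β ^ n = α) :
    α = 0 ∨ α = 1 := by
  by_cases hα0 : α = 0
  · exact Or.inl hα0
  right
  -- choose roots
  choose β hβ using fun n : ℕ => h (n + 1) (by omega)
  have hβ0 : ∀ n, β n ≠ 0 := by
    intro n hn
    exact hα0 (by rw [← hβ n, hn, zero_pow (by omega)])
  -- all finite-place counts of α vanish
  have hIcount : ∀ v : HeightOneSpectrum (𝓞 K), count K v (spanSingleton (𝓞 K)⁰ α) = 0 := by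
    intro v
    apply aux_int_eq_zero_of_forall_dvd
    intro n hn
    obtain ⟨γ, hγ⟩ := h n hn
    refine ⟨count K v (spanSingleton (𝓞 K)⁰ γ), ?_⟩
    rw [← count_pow, spanSingleton_pow, hγ]
  have hα_int : IsIntegral ℤ α := aux_isIntegral_of_count_zero hα0 hIcount
  -- every chosen root is integral
  have hβint : ∀ n, IsIntegral ℤ (β n) := by
    intro n
    apply aux_isIntegral_of_count_zero (hβ0 n)
    intro v
    have h1 : count K v (spanSingleton (𝓞 K)⁰ α)
        = (n + 1 : ℕ) * count K v (spanSingleton (𝓞 K)⁰ (β n)) := by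
      rw [← count_pow, spanSingleton_pow, hβ n]
    have h2 := hIcount v
    rw [h1] at h2
    have hne : ((n + 1 : ℕ) : ℤ) ≠ 0 := by exact_mod_cast Nat.succ_ne_zero n
    exact (mul_eq_zero.mp h2).resolve_left hne
  -- a uniform archimedean bound
  obtain ⟨B, hB⟩ : ∃ B : ℝ, ∀ φ : K →+* ℂ, max 1 ‖φ α‖ ≤ B := by
    obtain ⟨B, hB⟩ := (Set.finite_range (fun φ : K →+* ℂ => max 1 ‖φ α‖)).bddAbove
    exact ⟨B, fun φ => hB (Set.mem_range_self φ)⟩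
  have hmem : ∀ n, β n ∈ {x : K | IsIntegral ℤ x ∧ ∀ φ : K →+* ℂ, ‖φ x‖ ≤ B} := by
    intro n
    refine ⟨hβint n, fun φ => ?_⟩
    have hnorm : ‖φ (β n)‖ ^ (n + 1) = ‖φ α‖ := by
      rw [← norm_pow, ← map_pow, hβ n]
    refine le_trans ?_ (hB φ)
    rcases le_or_gt ‖φ (β n)‖ 1 with hle | hlt
    · exact le_trans hle (le_max_left _ _)
    · refine le_trans ?_ (le_max_right 1 ‖φ α‖)
      rw [← hnorm]
      exact le_self_pow₀ hlt.le (by omega)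
  -- pigeonhole: α is a root of unity
  have hfin := NumberField.Embeddings.finite_of_norm_le K ℂ B
  obtain ⟨a, -, b, -, hab, habeq⟩ :=
    Set.infinite_univ.exists_ne_map_eq_of_mapsTo (f := β) (fun n _ => hmem n) hfin
  have hroot : ∀ a b : ℕ, a < b → β a = β b → ∃ k : ℕ, 1 ≤ k ∧ α ^ k = 1 := by
    intro a b hlt he
    refine ⟨b - a, by omega, ?_⟩
    have h2 : β a ^ (b + 1) = α := by rw [he]; exact hβ b
    have h3 : α * β a ^ (b - a) = α := by
      rw [← hβ a, ← pow_add]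
      rw [show a + 1 + (b - a) = b + 1 by omega, h2, hβ a]
    have h4 : β a ^ (b - a) = 1 := mul_left_cancel₀ hα0 (by rw [h3, mul_one])
    calc α ^ (b - a) = (β a ^ (a + 1)) ^ (b - a) := by rw [hβ a]
      _ = (β a ^ (b - a)) ^ (a + 1) := by rw [← pow_mul, ← pow_mul, Nat.mul_comm]
      _ = 1 := by rw [h4, one_pow]
  obtain ⟨k, hk1, hk⟩ : ∃ k : ℕ, 1 ≤ k ∧ α ^ k = 1 := by
    rcases hab.lt_or_gt with hlt | hlt
    · exact hroot a b hlt habeq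
    · exact hroot b a hlt habeq.symm
  -- the torsion subgroup of Kˣ is finite
  set T := CommGroup.torsion Kˣ with hT
  have hTfin : Finite ↥T := by
    have hsub : Units.val '' (T : Set Kˣ)
        ⊆ {x : K | IsIntegral ℤ x ∧ ∀ φ : K →+* ℂ, ‖φ x‖ ≤ 1} := by
      rintro _ ⟨u, hu, rfl⟩
      obtain ⟨j, hj, hju⟩ := isOfFinOrder_iff_pow_eq_one.mp hu
      have hju' : (u : K) ^ j = 1 := by
        rw [← Units.val_pow_eq_pow_val, hju, Units.val_one]
      constructor
      · exact ⟨Polynomial.X ^ j - Polynomial.C 1, Polynomial.monic_X_pow_sub_C 1 hj.ne', by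
          simp [Polynomial.eval₂_sub, hju']⟩
      · intro φ
        have hn1 : ‖φ (u : K)‖ ^ j = 1 := by
          rw [← norm_pow, ← map_pow, hju', _root_.map_one, norm_one]
        have h0 : (0 : ℝ) ≤ ‖φ (u : K)‖ := norm_nonneg _
        rcases lt_trichotomy ‖φ (u : K)‖ 1 with hlt | heq | hgt
        · exact hlt.le
        · exact heq.le
        · exfalso
          have := one_lt_pow₀ hgt hj.ne'
          rw [hn1] at this
          exact lt_irrefl 1 this
    have h1 : (Units.val '' (T : Set Kˣ)).Finite :=
      (NumberField.Embeddings.finite_of_norm_le K ℂ 1).subset hsub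
    have h2 : (T : Set Kˣ).Finite :=
      Set.Finite.of_finite_image h1 (Set.injOn_of_injective Units.val_injective)
    exact h2.to_subtype
  have hN : 1 ≤ Nat.card ↥T := Nat.card_pos
  obtain ⟨γ, hγ⟩ := h (Nat.card ↥T) hN
  have hγ0 : γ ≠ 0 := by
    intro hg
    exact hα0 (by rw [← hγ, hg, zero_pow (by omega)])
  set g : Kˣ := Units.mk0 γ hγ0 with hg
  have hgN : g ^ Nat.card ↥T = Units.mk0 α hα0 := by
    ext
    simp [hg, hγ]
  have hgT : g ∈ T := by
    rw [hT, CommGroup.mem_torsion]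
    refine isOfFinOrder_iff_pow_eq_one.mpr ⟨Nat.card ↥T * k, by positivity, ?_⟩
    rw [pow_mul, hgN]
    ext
    simp [hk]
  have hfinal : (⟨g, hgT⟩ : T) ^ Nat.card ↥T = 1 := pow_card_eq_one'
  have hg1 : g ^ Nat.card ↥T = 1 := by
    have h5 : ((⟨g, hgT⟩ ^ Nat.card ↥T : T) : Kˣ) = ((1 : T) : Kˣ) := congrArg _ hfinal
    rwa [SubmonoidClass.coe_pow, OneMemClass.coe_one] at h5
  have : γ ^ Nat.card ↥T = 1 := by
    have := congrArg Units.val hg1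
    simpa [hg] using this
  rw [← hγ, this]
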